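/- Let m ≥ 1 and let ∞ > t₁ ≥ t₂ ≥ ⋯ ≥ t_{m+1} ≥ 0 be real numbers. Then the iterated integral ∫_{t₂}^{t₁} ds₁ ∫_{t₃}^{t₂} ds₂ ⋯ ∫_{t_{m+1}}^{t_m} ds_m ∏_{k=1}^{m} s_k e^{−s_k²/2} · ∏_{1≤j<k≤m} (s_j² − s_k²) equals the determinant of the (m+1)×(m+1) matrix M defined, with τ_j := t_{m+2−j} for j = 1,…,m+1 (so the columns correspond to t_{m+1}, t_m, …, t₁ in this order), by M_{ij} = e^{−τ_j²/2} τ_j^{2(i−1)} for 1 ≤ i ≤ m, and M_{m+1,j} = 1. -/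

import Mathlib

open MeasureTheory

namespace GO

noncomputable def f (q : ℕ) (x : ℝ) : ℝ := Real.exp (-x ^ 2 / 2) * (x ^ 2) ^ q
noncomputable def phi (j : ℕ) (x : ℝ) : ℝ := (x * Real.exp (-x ^ 2 / 2)) * (x ^ 2) ^ j

noncomputable def G : ℕ → ℝ → ℝ
  | 0 => fun x => -Real.exp (-x ^ 2 / 2)
  | (p+1) => fun x => -Real.exp (-x ^ 2 / 2) * (x ^ 2) ^ (p+1) + (2 * ((p : ℝ) + 1)) * G p x

lemma phi_cont (j : ℕ) : Continuous (phi j) := by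
  unfold phi; continuity

lemma hasDerivAt_exp_part (x : ℝ) :
    HasDerivAt (fun y : ℝ => Real.exp (-y ^ 2 / 2)) (-x * Real.exp (-x ^ 2 / 2)) x := by
  have h1 : HasDerivAt (fun y : ℝ => -y ^ 2 / 2) (-x) x := by
    have := (hasDerivAt_pow 2 x).neg.div_const 2
    refine this.congr_deriv ?_; push_cast; ring
  have := (Real.hasDerivAt_exp (-x ^ 2 / 2)).comp x h1
  refine this.congr_deriv ?_; ring

lemma hasDerivAt_G (p : ℕ) (x : ℝ) : HasDerivAt (G p) (phi p x) x := by
  induction p with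
  | zero =>
      have h := (hasDerivAt_exp_part x).neg
      have e : phi 0 x = -(-x * Real.exp (-x ^ 2 / 2)) := by simp [phi]
      rw [show G 0 = fun y => -Real.exp (-y ^ 2 / 2) from rfl, e]
      exact h
  | succ p ih =>
      have h2 : HasDerivAt (fun y : ℝ => (y ^ 2) ^ (p + 1))
          ((2 * ((p : ℝ) + 1)) * (x * (x ^ 2) ^ p)) x := by
        have h := hasDerivAt_pow (2 * (p + 1)) x
        have e : (fun y : ℝ => (y ^ 2) ^ (p+1)) = fun y : ℝ => y ^ (2 * (p + 1)) := by
          funext y; rw [← pow_mul]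
        rw [e]
        refine h.congr_deriv ?_
        push_cast
        have h3 : 2 * (p + 1) - 1 = 2 * p + 1 := by omega
        rw [h3]
        ring
      have h1 := ((hasDerivAt_exp_part x).neg.mul h2).add
        (ih.const_mul ((2 : ℝ) * ((p : ℝ) + 1)))
      have e : G (p + 1) = fun y => -Real.exp (-y ^ 2 / 2) * (y ^ 2) ^ (p+1)
          + (2 * ((p : ℝ) + 1)) * G p y := rfl
      rw [e]
      refine h1.congr_deriv ?_
      simp only [phi, Pi.neg_apply]
      ring

noncomputable def c : ℕ → ℕ → ℝ
  | 0, 0 => -1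
  | 0, _ + 1 => 0
  | p + 1, q => if q = p + 1 then -1 else (2 * ((p : ℝ) + 1)) * c p q

lemma c_diag (p : ℕ) : c p p = -1 := by
  cases p with
  | zero => rfl
  | succ p => simp [c]

lemma c_of_lt {p q : ℕ} (h : p < q) : c p q = 0 := by
  induction p generalizing q with
  | zero => match q, h with
            | q + 1, _ => rfl
  | succ p ih =>
      have hne : q ≠ p + 1 := by omega
      simp only [c, if_neg hne]
      rw [ih (by omega)]; ring

lemma G_eq_sum (p : ℕ) (x : ℝ) :
    G p x = ∑ q ∈ Finset.range (p + 1), c p q * f q x := by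
  induction p with
  | zero => simp [G, c, f]
  | succ p ih =>
      rw [Finset.sum_range_succ]
      have hd : c (p+1) (p+1) = -1 := c_diag (p+1)
      have hstep : ∀ q ∈ Finset.range (p+1), c (p+1) q * f q x
          = (2 * ((p : ℝ) + 1)) * (c p q * f q x) := by
        intro q hq
        simp only [Finset.mem_range] at hq
        simp only [c, if_neg (by omega : q ≠ p + 1)]
        ring
      rw [Finset.sum_congr rfl hstep, ← Finset.mul_sum, ← ih, hd]
      show -Real.exp (-x ^ 2 / 2) * (x ^ 2) ^ (p+1) + (2 * ((p : ℝ) + 1)) * G p x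
        = 2 * ((p : ℝ) + 1) * G p x + -1 * f (p+1) x
      simp only [f]; ring

lemma integral_phi {a b : ℝ} (hab : a ≤ b) (p : ℕ) :
    ∫ x in Set.Ioo a b, phi p x = G p b - G p a := by
  rw [← integral_Ioc_eq_integral_Ioo, ← intervalIntegral.integral_of_le hab]
  exact intervalIntegral.integral_eq_sub_of_hasDerivAt
    (fun x _ => hasDerivAt_G p x) ((phi_cont p).intervalIntegrable a b)

lemma prod_Iio_rev {m : ℕ} (g : Fin m → Fin m → ℝ) :
    ∏ k : Fin m, ∏ j ∈ Finset.Iio k, g j k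
      = ∏ i : Fin m, ∏ j ∈ Finset.Ioi i, g (Fin.rev j) (Fin.rev i) := by
  rw [← Equiv.prod_comp Fin.revPerm
    (fun i => ∏ j ∈ Finset.Ioi i, g (Fin.rev j) (Fin.rev i))]
  refine Finset.prod_congr rfl fun k _ => ?_
  simp only [Fin.revPerm_apply, Fin.rev_rev]
  refine Finset.prod_equiv Fin.revPerm ?_ ?_
  · intro i
    simp [Fin.rev_lt_rev]
  · intro i _
    simp [Fin.rev_rev]

lemma integral_det_box {m : ℕ} (a b : Fin m → ℝ) (e : Equiv.Perm (Fin m))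
    (F : Fin m → Fin m → ℝ → ℝ) (hF : ∀ i j, Continuous (F i j)) :
    (∫ u in {u : Fin m → ℝ | ∀ i, u i ∈ Set.Ioo (a i) (b i)},
      Matrix.det (Matrix.of fun i j => F i j (u (e j))))
    = Matrix.det (Matrix.of fun i j => ∫ x in Set.Ioo (a (e j)) (b (e j)), F i j x) := by
  have hSet : {u : Fin m → ℝ | ∀ i, u i ∈ Set.Ioo (a i) (b i)}
      = Set.univ.pi fun i => Set.Ioo (a i) (b i) := by
    ext u; simp [Set.mem_pi]
  have hS : MeasurableSet {u : Fin m → ℝ | ∀ i, u i ∈ Set.Ioo (a i) (b i)} := by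
    rw [hSet]; exact MeasurableSet.univ_pi fun i => measurableSet_Ioo
  set g : Fin m → Fin m → ℝ → ℝ :=
    fun i j => (Set.Ioo (a (e j)) (b (e j))).indicator (F i j) with hg
  have hgint : ∀ i j, Integrable (g i j) := by
    intro i j
    rw [hg]
    rw [integrable_indicator_iff measurableSet_Ioo]
    exact ((hF i j).integrableOn_Icc).mono_set Set.Ioo_subset_Icc_self
  rw [← integral_indicator hS]
  have hpt : (Set.indicator {u : Fin m → ℝ | ∀ i, u i ∈ Set.Ioo (a i) (b i)}
        fun u => Matrix.det (Matrix.of fun i j => F i j (u (e j))))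
      = fun u => Matrix.det (Matrix.of fun i j => g i j (u (e j))) := by
    funext u
    by_cases hu : u ∈ {u : Fin m → ℝ | ∀ i, u i ∈ Set.Ioo (a i) (b i)}
    · rw [Set.indicator_of_mem hu]
      congr 1
      ext i j
      simp only [Matrix.of_apply, hg]
      rw [Set.indicator_of_mem (hu (e j))]
    · rw [Set.indicator_of_notMem hu]
      symm
      simp only [Set.mem_setOf_eq, not_forall] at hu
      obtain ⟨i0, hi0⟩ := hu
      apply Matrix.det_eq_zero_of_column_eq_zero (e.symm i0)
      intro i
      simp only [Matrix.of_apply, hg, Equiv.apply_symm_apply]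
      exact Set.indicator_of_notMem hi0 _
  rw [hpt]
  -- expand determinants
  simp only [Matrix.det_apply, Matrix.of_apply, Units.smul_def, zsmul_eq_mul]
  rw [integral_finset_sum]
  · refine Finset.sum_congr rfl fun σ _ => ?_
    rw [integral_const_mul]
    congr 1
    have hre : ∀ u : Fin m → ℝ, (∏ i, g (σ i) i (u (e i)))
        = ∏ k, g (σ (e.symm k)) (e.symm k) (u k) := by
      intro u
      rw [← Equiv.prod_comp e (fun k => g (σ (e.symm k)) (e.symm k) (u k))]
      simp
    simp_rw [hre]
    rw [MeasureTheory.integral_fintype_prod_volume_eq_prod (ι := Fin m)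
      (fun k => g (σ (e.symm k)) (e.symm k))]
    rw [← Equiv.prod_comp e (fun k => ∫ x, g (σ (e.symm k)) (e.symm k) x)]
    refine Finset.prod_congr rfl fun i _ => ?_
    simp only [Equiv.symm_apply_apply]
    rw [hg]
    simp only []
    rw [integral_indicator measurableSet_Ioo]
  · intro σ _
    apply Integrable.const_mul
    have hre : (fun u : Fin m → ℝ => ∏ i, g (σ i) i (u (e i)))
        = fun u => ∏ k, g (σ (e.symm k)) (e.symm k) (u k) := by
      funext u
      rw [← Equiv.prod_comp e (fun k => g (σ (e.symm k)) (e.symm k) (u k))]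
      simp
    rw [hre]
    exact Integrable.fintype_prod_dep fun k => hgint _ _

noncomputable def E (m : ℕ) : Matrix (Fin (m+1)) (Fin (m+1)) ℝ :=
  Matrix.of fun k j => if k = j then 1 else if (k : ℕ) + 1 = (j : ℕ) then -1 else 0

lemma det_E (m : ℕ) : (E m).det = 1 := by
  have h : (E m).BlockTriangular id := by
    intro i j hij
    simp only [id_eq] at hij
    simp only [E, Matrix.of_apply, if_neg (by omega : ¬ i = j),
      if_neg (by omega : ¬ (i : ℕ) + 1 = (j : ℕ))]
  rw [Matrix.det_of_upperTriangular h]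
  simp [E]

lemma sum_mul_E_zero (m : ℕ) (v : Fin (m+1) → ℝ) :
    ∑ k, v k * E m k 0 = v 0 := by
  have h : ∀ k : Fin (m+1), v k * E m k 0 = if k = 0 then v k else 0 := by
    intro k
    by_cases hk : k = 0
    · simp [hk, E]
    · simp only [E, Matrix.of_apply, if_neg hk,
        if_neg (by simp : ¬ (k : ℕ) + 1 = ((0 : Fin (m+1)) : ℕ)), mul_zero, if_neg hk]
  rw [Finset.sum_congr rfl fun k _ => h k]
  simp
lemma sum_mul_E_succ (m : ℕ) (v : Fin (m+1) → ℝ) (j : Fin m) :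
    ∑ k, v k * E m k j.succ = v j.succ - v j.castSucc := by
  have h : ∀ k : Fin (m+1), v k * E m k j.succ
      = (if k = j.succ then v k else 0) + (if k = j.castSucc then -v k else 0) := by
    intro k
    have hvs : (j.succ : ℕ) = (j : ℕ) + 1 := rfl
    have hvc : (j.castSucc : ℕ) = (j : ℕ) := rfl
    by_cases h1 : k = j.succ
    · have hne : ¬ j.succ = j.castSucc := by
        intro hc
        have := congrArg Fin.val hc
        simp [hvs, hvc] at this
      subst h1
      simp [E, hne, hvs, hvc]
    · by_cases h2 : k = j.castSucc
      · have hcond : (k : ℕ) + 1 = (j.succ : ℕ) := by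
          rw [h2, hvs, hvc]
        simp only [E, Matrix.of_apply, if_neg h1, if_pos hcond, if_pos h2, if_neg h1]
        ring
      · have hcond : ¬ ((k : ℕ) + 1 = (j.succ : ℕ)) := by
          rw [hvs]
          intro hc
          apply h2
          apply Fin.ext
          rw [hvc]; omega
        have hkj : ¬ ((k : ℕ) = (j : ℕ)) := by
          rw [hvs] at hcond; omega
        simp [E, h1, h2, hcond, hkj]
  rw [Finset.sum_congr rfl fun k _ => h k]
  rw [Finset.sum_add_distrib]
  simp [sub_eq_add_neg]

lemma det_ones_row {m : ℕ} (g : ℕ → ℝ → ℝ) (τ : Fin (m+1) → ℝ) :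
    (Matrix.of fun i j : Fin (m+1) => if (i : ℕ) < m then g i (τ j) else 1).det
      = (-1 : ℝ) ^ m *
        (Matrix.of fun i j : Fin m => g i (τ j.succ) - g i (τ j.castSucc)).det := by
  set Mt := Matrix.of fun i j : Fin (m+1) => if (i : ℕ) < m then g i (τ j) else (1:ℝ) with hMt
  have hdet : Mt.det = (Mt * E m).det := by rw [Matrix.det_mul, det_E, mul_one]
  rw [hdet, Matrix.det_succ_row (Mt * E m) (Fin.last m)]
  rw [Finset.sum_eq_single 0]
  · have hlast : (Mt * E m) (Fin.last m) 0 = 1 := by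
      rw [Matrix.mul_apply, sum_mul_E_zero]
      simp [hMt]
    rw [hlast]
    have hsub : (Mt * E m).submatrix (Fin.last m).succAbove (0 : Fin (m+1)).succAbove
        = Matrix.of fun i j : Fin m => g i (τ j.succ) - g i (τ j.castSucc) := by
      ext i j
      rw [Matrix.submatrix_apply, Fin.succAbove_last, Fin.zero_succAbove,
        Matrix.mul_apply, sum_mul_E_succ]
      have hlt : ((i.castSucc : ℕ)) < m := i.isLt
      simp [hMt, hlt]
    rw [hsub]
    simp
  · intro j _ hj
    have hlast : (Mt * E m) (Fin.last m) j = 0 := by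
      rw [Matrix.mul_apply]
      rcases Fin.eq_zero_or_eq_succ j with h0 | ⟨j', rfl⟩
      · exact absurd h0 hj
      · rw [sum_mul_E_succ]
        simp [hMt]
    rw [hlast]
    ring
  · simp

lemma G_eq_sum_fin {m : ℕ} (i : Fin m) (x : ℝ) :
    G i x = ∑ q : Fin m, c i q * f q x := by
  rw [Fin.sum_univ_eq_sum_range (fun q => c i q * f q x) m, G_eq_sum]
  refine Finset.sum_subset ?_ ?_
  · intro q hq
    simp only [Finset.mem_range] at hq ⊢
    omega
  · intro q _ hq
    simp only [Finset.mem_range] at hq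
    rw [c_of_lt (by omega)]
    ring

lemma det_c (m : ℕ) : (Matrix.of fun i j : Fin m => c i j).det = (-1 : ℝ) ^ m := by
  have h : (Matrix.of fun i j : Fin m => c i j).BlockTriangular OrderDual.toDual := by
    intro i j hij
    exact c_of_lt (by exact_mod_cast hij)
  rw [Matrix.det_of_lowerTriangular _ h]
  simp [c_diag]

lemma integrand_eq {m : ℕ} (u : Fin m → ℝ) :
    (∏ k : Fin m, u k * Real.exp (-(u k) ^ 2 / 2)) *
        ∏ k : Fin m, ∏ j ∈ Finset.Iio k, ((u j) ^ 2 - (u k) ^ 2)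
    = Matrix.det (Matrix.of fun i j : Fin m => phi i (u (Fin.revPerm j))) := by
  have h2 : (∏ k : Fin m, ∏ j ∈ Finset.Iio k, ((u j) ^ 2 - (u k) ^ 2))
      = (Matrix.vandermonde fun i : Fin m => (u (Fin.rev i)) ^ 2).det := by
    rw [Matrix.det_vandermonde]
    exact prod_Iio_rev fun j k => (u j) ^ 2 - (u k) ^ 2
  have h1 : (∏ k : Fin m, u k * Real.exp (-(u k) ^ 2 / 2))
      = ∏ k : Fin m, u (Fin.rev k) * Real.exp (-(u (Fin.rev k)) ^ 2 / 2) := by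
    exact (Equiv.prod_comp Fin.revPerm
      (fun k => u k * Real.exp (-(u k) ^ 2 / 2))).symm
  rw [h1, h2, ← Matrix.det_mul_column]
  have hB : (Matrix.of fun i j : Fin m =>
        (u (Fin.rev i) * Real.exp (-(u (Fin.rev i)) ^ 2 / 2)) *
          Matrix.vandermonde (fun i : Fin m => (u (Fin.rev i)) ^ 2) i j)
      = (Matrix.of fun i j : Fin m => phi i (u (Fin.revPerm j))).transpose := by
    ext i j
    simp [Matrix.vandermonde, phi]
  rw [hB, Matrix.det_transpose]


end GO

open GO in
/-- Gauss case, odd order `n = 2m+1`, integrating out the even-indexed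
singular values over the interlacing box `s_k ∈ (t_{k+1}, t_k)` gives an `(m+1)×(m+1)`
determinant with columns indexed by `τ_j = t_{m+2-j}`, rows `e^{-τ²/2} τ^{2(i-1)}` and
a final row of ones. -/
theorem gauss_odd_integrate_even (m : ℕ) (hm : 1 ≤ m) (t : ℕ → ℝ)
    (hdec : ∀ i, 1 ≤ i → i < m + 1 → t (i + 1) ≤ t i) (htm : 0 ≤ t (m + 1)) :
    (∫ u in {u : Fin m → ℝ | ∀ i : Fin m,
        t ((i : ℕ) + 2) < u i ∧ u i < t ((i : ℕ) + 1)},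
      (∏ k : Fin m, u k * Real.exp (-(u k) ^ 2 / 2)) *
        ∏ k : Fin m, ∏ j ∈ Finset.Iio k, ((u j) ^ 2 - (u k) ^ 2)) =
    Matrix.det (Matrix.of fun i j : Fin (m + 1) =>
      if (i : ℕ) < m then
        Real.exp (-(t (m + 1 - (j : ℕ))) ^ 2 / 2) * (t (m + 1 - (j : ℕ))) ^ (2 * (i : ℕ))
      else 1) := by
  classical
  set a : Fin m → ℝ := fun i => t ((i : ℕ) + 2) with ha
  set b : Fin m → ℝ := fun i => t ((i : ℕ) + 1) with hb
  set D : Matrix (Fin m) (Fin m) ℝ :=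
    Matrix.of fun q j : Fin m => f q (t (m - (j : ℕ))) - f q (t (m + 1 - (j : ℕ))) with hD
  -- Right hand side
  have hRHS : Matrix.det (Matrix.of fun i j : Fin (m + 1) =>
      if (i : ℕ) < m then
        Real.exp (-(t (m + 1 - (j : ℕ))) ^ 2 / 2) * (t (m + 1 - (j : ℕ))) ^ (2 * (i : ℕ))
      else 1) = (-1 : ℝ) ^ m * D.det := by
    have e1 : (Matrix.of fun i j : Fin (m + 1) =>
        if (i : ℕ) < m then
          Real.exp (-(t (m + 1 - (j : ℕ))) ^ 2 / 2) * (t (m + 1 - (j : ℕ))) ^ (2 * (i : ℕ))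
        else 1)
        = Matrix.of fun i j : Fin (m + 1) =>
          if (i : ℕ) < m then f i (t (m + 1 - (j : ℕ))) else 1 := by
      ext i j
      simp only [Matrix.of_apply, f, pow_mul]
    rw [e1, det_ones_row f (fun j : Fin (m+1) => t (m + 1 - (j : ℕ)))]
    congr 2
    ext i j
    simp only [Matrix.of_apply, hD, Fin.val_succ, Fin.coe_castSucc]
    have h1 : m + 1 - ((j : ℕ) + 1) = m - (j : ℕ) := by omega
    rw [h1]
  rw [hRHS]
  -- Left hand side
  have hset : {u : Fin m → ℝ | ∀ i : Fin m,
        t ((i : ℕ) + 2) < u i ∧ u i < t ((i : ℕ) + 1)}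
      = {u : Fin m → ℝ | ∀ i, u i ∈ Set.Ioo (a i) (b i)} := rfl
  rw [hset]
  simp only [integrand_eq]
  rw [integral_det_box a b Fin.revPerm (fun i _ => phi i) (fun i _ => phi_cont i)]
  have hBD : (Matrix.of fun i j : Fin m =>
        ∫ x in Set.Ioo (a (Fin.revPerm j)) (b (Fin.revPerm j)), phi i x)
      = (Matrix.of fun i j : Fin m => c i j) * D := by
    ext i j
    have hrv : ((Fin.revPerm j : Fin m) : ℕ) = m - 1 - (j : ℕ) := by
      simp [Fin.revPerm, Fin.val_rev]
      omega
    have hab : a (Fin.revPerm j) ≤ b (Fin.revPerm j) := by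
      rw [ha, hb]
      exact hdec _ (by omega) (by rw [hrv]; omega)
    rw [Matrix.of_apply, integral_phi hab]
    have hb' : b (Fin.revPerm j) = t (m - (j : ℕ)) := by
      show t (((Fin.revPerm j : Fin m) : ℕ) + 1) = t (m - (j : ℕ))
      rw [hrv]; congr 1; omega
    have ha' : a (Fin.revPerm j) = t (m + 1 - (j : ℕ)) := by
      show t (((Fin.revPerm j : Fin m) : ℕ) + 2) = t (m + 1 - (j : ℕ))
      rw [hrv]; congr 1; omega
    rw [hb', ha', Matrix.mul_apply]
    simp only [Matrix.of_apply, hD]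
    rw [G_eq_sum_fin i (t (m - (j : ℕ))), G_eq_sum_fin i (t (m + 1 - (j : ℕ)))]
    rw [← Finset.sum_sub_distrib]
    refine Finset.sum_congr rfl fun q _ => ?_
    ring
  rw [hBD, Matrix.det_mul, det_c]
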